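/- Assume D ≠ 0. There exists a constant C > 0, depending only on the forms q₁,…,q_g, with the following property: for every prime p, all integers e₁,…,e_g ≥ 0, and every permutation σ of {1,…,g} such that e_{σ(1)} ≤ e_{σ(2)} ≤ … ≤ e_{σ(g)}, one has ρ(p^{e₁},…,p^{e_g}) ≤ C · (e_{σ(g)} − e_{σ(g−1)} + 1) · p^{2·e_{σ(1)} + … + 2·e_{σ(g−1)} + e_{σ(g)}}. -/

import Mathlib

set_option maxHeartbeats 1000000


open Finset

/-- The binary quadratic form `q_i(x,y) = a_i x^2 + 2 b_i x y + c_i y^2`. -/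
def qf {g : ℕ} (a b c : Fin g → ℤ) (i : Fin g) (x : ℤ × ℤ) : ℤ :=
  a i * x.1 ^ 2 + 2 * b i * x.1 * x.2 + c i * x.2 ^ 2

/-- The resolvent of two binary quadratic forms. -/
def res₂ (a₁ b₁ c₁ a₂ b₂ c₂ : ℤ) : ℤ :=
  (a₁ * c₂ - a₂ * c₁) ^ 2 - 4 * (b₁ * c₂ - b₂ * c₁) * (a₁ * b₂ - a₂ * b₁)

/-- The quantity `D`. -/
def Dconst (g : ℕ) (a b c : Fin g → ℤ) : ℤ :=
  (∏ p ∈ (Finset.range (2 * g + 1)).filter Nat.Prime, (p : ℤ)) *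
    (∏ k, a k * c k * (b k ^ 2 - a k * c k)) *
    ∏ i, ∏ j ∈ Finset.Ioi i, res₂ (a i) (b i) (c i) (a j) (b j) (c j)

/-- `ρ(d₁,…,d_g)`. -/
def rho (g : ℕ) (a b c : Fin g → ℤ) (d : Fin g → ℕ) : ℕ :=
  (((Finset.range (∏ i, d i)) ×ˢ (Finset.range (∏ i, d i))).filter
    (fun x => ∀ i, (d i : ℤ) ∣ qf a b c i ((x.1 : ℤ), (x.2 : ℤ)))).card

/-- `ρ*(d₁,…,d_g)`. -/
def rhostar (g : ℕ) (a b c : Fin g → ℤ) (d : Fin g → ℕ) : ℕ :=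
  (((Finset.range (∏ i, d i)) ×ˢ (Finset.range (∏ i, d i))).filter
    (fun x => (∀ i, (d i : ℤ) ∣ qf a b c i ((x.1 : ℤ), (x.2 : ℤ))) ∧
      Nat.gcd (Nat.gcd x.1 x.2) (∏ i, d i) = 1)).card

/-- `ψ(d₁,…,d_g) = ∏_p p^{⌈max_i v_p(d_i)/2⌉}`. -/
def psi (g : ℕ) (d : Fin g → ℕ) : ℕ :=
  ∏ p ∈ (∏ i, d i).primeFactors,
    p ^ (((Finset.univ.sup fun i => (d i).factorization p) + 1) / 2)


def ival (p : ℕ) (z : ℤ) : ℕ := z.natAbs.factorization p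

lemma ival_dvd_iff {p : ℕ} (hp : p.Prime) {z : ℤ} (hz : z ≠ 0) {k : ℕ} :
    (p:ℤ)^k ∣ z ↔ k ≤ ival p z := by
  rw [show ((p:ℤ)^k) = ((p^k : ℕ) : ℤ) by push_cast; ring, Int.natCast_dvd,
    Nat.Prime.pow_dvd_iff_le_factorization hp (Int.natAbs_ne_zero.mpr hz)]
  rfl

lemma ival_pow_dvd {p : ℕ} (hp : p.Prime) {z : ℤ} (hz : z ≠ 0) :
    (p:ℤ)^(ival p z) ∣ z := (ival_dvd_iff hp hz).mpr le_rfl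

lemma ival_not_dvd {p : ℕ} (hp : p.Prime) {z : ℤ} (hz : z ≠ 0) :
    ¬ (p:ℤ)^(ival p z + 1) ∣ z := by
  rw [ival_dvd_iff hp hz]; omega

lemma ival_mul {p : ℕ} {A B : ℤ} (hA : A ≠ 0) (hB : B ≠ 0) :
    ival p (A * B) = ival p A + ival p B := by
  unfold ival
  rw [Int.natAbs_mul, Nat.factorization_mul (Int.natAbs_ne_zero.mpr hA)
    (Int.natAbs_ne_zero.mpr hB)]
  rfl

lemma pow_dvd_cancel {p : ℕ} (hp : p.Prime) {A B : ℤ} {n j : ℕ}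
    (h : (p:ℤ)^n ∣ A * B) (hA : ¬ (p:ℤ)^(j+1) ∣ A) : (p:ℤ)^(n-j) ∣ B := by
  have hA0 : A ≠ 0 := by rintro rfl; exact hA (dvd_zero _)
  rcases eq_or_ne B 0 with rfl | hB0
  · exact dvd_zero _
  have hAB : A * B ≠ 0 := mul_ne_zero hA0 hB0
  rw [ival_dvd_iff hp hAB, ival_mul hA0 hB0] at h
  rw [ival_dvd_iff hp hB0]
  have hvA : ival p A ≤ j := by
    by_contra hc
    exact hA ((ival_dvd_iff hp hA0).mpr (by omega))
  omega

lemma pow_le_natAbs {p : ℕ} {z : ℤ} (hz : z ≠ 0) {k : ℕ}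
    (h : (p:ℤ)^k ∣ z) : p^k ≤ z.natAbs := by
  refine Nat.le_of_dvd (Int.natAbs_pos.mpr hz) ?_
  rw [show ((p:ℤ)^k) = ((p^k : ℕ) : ℤ) by push_cast; ring, Int.natCast_dvd] at h
  exact h

lemma mod_eq_of_int_dvd {t t' q : ℕ} (h : (q:ℤ) ∣ (t:ℤ) - t') : t % q = t' % q := by
  have h2 : (t:ℤ) % q = (t':ℤ) % q := Int.ModEq.symm (Int.modEq_iff_dvd.mpr h)
  rw [← Int.natCast_mod, ← Int.natCast_mod] at h2
  exact_mod_cast h2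

lemma cong_bound {p : ℕ} (hp : p.Prime) {n E : ℕ} (hE : E ≤ n) (s : Finset ℕ)
    (hs : s ⊆ Finset.range (p^n))
    (hcong : ∀ t ∈ s, ∀ t' ∈ s, (p:ℤ)^E ∣ (t:ℤ) - t') : s.card ≤ p^(n-E) := by
  have hcard : s.card ≤ (Finset.range (p^(n-E))).card := by
    apply Finset.card_le_card_of_injOn (fun t => t / p^E)
    · intro t ht
      simp only [Finset.coe_range, Set.mem_Iio]
      have htlt := Finset.mem_range.mp (hs ht)
      apply Nat.div_lt_of_lt_mul
      rw [← pow_add, Nat.add_sub_cancel' hE]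
      exact htlt
    · intro t ht t' ht' hdiv
      have hmod : t % p^E = t' % p^E := by
        have := hcong t ht t' ht'
        rw [show ((p:ℤ)^E) = ((p^E : ℕ):ℤ) by push_cast; ring] at this
        exact mod_eq_of_int_dvd this
      have hdiv' : t / p^E = t' / p^E := hdiv
      calc t = p^E * (t / p^E) + t % p^E := (Nat.div_add_mod t (p^E)).symm
        _ = p^E * (t' / p^E) + t' % p^E := by rw [hdiv', hmod]
        _ = t' := Nat.div_add_mod t' (p^E)
  simpa using hcard

/-- Root counting: roots of an irreducible integral quadratic mod p^n are at most
32|a||δ| in number, uniformly in p and n. -/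
lemma rootcount {p : ℕ} (hp : p.Prime) (a b c : ℤ) (ha : a ≠ 0)
    (hδ : b^2 - a*c ≠ 0) (n : ℕ) :
    ((Finset.range (p^n)).filter
      (fun t : ℕ => (p:ℤ)^n ∣ a*(t:ℤ)^2 + 2*b*(t:ℤ) + c)).card
      ≤ 32 * a.natAbs * (b^2 - a*c).natAbs := by
  set δ : ℤ := b^2 - a*c with hδdef
  have h4δ : (4:ℤ)*δ ≠ 0 := by simp [hδ]
  have h2a : (2:ℤ)*a ≠ 0 := by simp [ha]
  set W := ival p (4*δ) with hW
  set V := ival p (2*a) with hV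
  set v2 := ival p 2 with hv2
  have hpW : p^W ≤ 4 * δ.natAbs := by
    have := pow_le_natAbs h4δ (ival_pow_dvd hp h4δ)
    simpa [Int.natAbs_mul] using this
  have hpV : p^V ≤ 2 * a.natAbs := by
    have := pow_le_natAbs h2a (ival_pow_dvd hp h2a)
    simpa [Int.natAbs_mul] using this
  have hpv2 : p^v2 ≤ 2 := by
    have := pow_le_natAbs (by norm_num : (2:ℤ) ≠ 0) (ival_pow_dvd hp (by norm_num))
    simpa using this
  have hane : 1 ≤ a.natAbs := Int.natAbs_pos.mpr ha
  have hδne : 1 ≤ δ.natAbs := Int.natAbs_pos.mpr (by simpa [hδdef] using hδ)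
  set T := ((Finset.range (p^n)).filter
      (fun t : ℕ => (p:ℤ)^n ∣ a*(t:ℤ)^2 + 2*b*(t:ℤ) + c)) with hT
  -- small n case
  by_cases hsmall : n ≤ W + v2 + V
  · have h1 : T.card ≤ p^n := by
      calc T.card ≤ (Finset.range (p^n)).card := Finset.card_le_card (Finset.filter_subset _ _)
        _ = p^n := Finset.card_range _
    have h2 : p^n ≤ p^W * p^v2 * p^V := by
      rw [← pow_add, ← pow_add]
      exact Nat.pow_le_pow_right hp.pos hsmall
    calc T.card ≤ p^W * p^v2 * p^V := le_trans h1 h2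
      _ ≤ (4*δ.natAbs) * 2 * (2*a.natAbs) := by
          exact Nat.mul_le_mul (Nat.mul_le_mul hpW hpv2) hpV
      _ ≤ 32 * a.natAbs * δ.natAbs := by nlinarith
  · push_neg at hsmall
    rcases Finset.eq_empty_or_nonempty T with hTe | ⟨t₁, ht₁⟩
    · rw [hTe]; simp
    -- u-values
    have hmem : ∀ t ∈ T, (p:ℤ)^n ∣ (2*(a*(t:ℤ)+b))^2 - 4*δ := by
      intro t ht
      have hq := (Finset.mem_filter.mp ht).2
      have : (2*(a*(t:ℤ)+b))^2 - 4*δ = 4*a*(a*(t:ℤ)^2 + 2*b*(t:ℤ) + c) := by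
        rw [hδdef]; ring
      rw [this]
      exact Dvd.dvd.mul_left hq _
    have hW1n : W + 1 ≤ n := by omega
    have hune : ∀ t ∈ T, 2*(a*(t:ℤ)+b) ≠ 0 := by
      intro t ht h0
      have := hmem t ht
      rw [h0] at this
      have h' : (p:ℤ)^(W+1) ∣ (0:ℤ)^2 - 4*δ := dvd_trans (pow_dvd_pow _ hW1n) this
      have h'' : (p:ℤ)^(W+1) ∣ -(4*δ) := by simpa using h'
      exact ival_not_dvd hp h4δ (dvd_neg.mp h'')
    have hval : ∀ t ∈ T, 2 * ival p (2*(a*(t:ℤ)+b)) = W := by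
      intro t ht
      have hu0 : 2*(a*(t:ℤ)+b) ≠ 0 := hune t ht
      set u := 2*(a*(t:ℤ)+b) with hu
      have hu2 : u^2 ≠ 0 := pow_ne_zero _ hu0
      have hiu2 : ival p (u^2) = 2 * ival p u := by
        rw [sq, ival_mul hu0 hu0]; ring
      have hdvd := hmem t ht
      rcases lt_trichotomy (ival p (u^2)) W with hlt | heq | hgt
      · exfalso
        have h1 : (p:ℤ)^(ival p (u^2)+1) ∣ 4*δ := (ival_dvd_iff hp h4δ).mpr (by omega)
        have h2 : (p:ℤ)^(ival p (u^2)+1) ∣ u^2 - 4*δ :=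
          dvd_trans (pow_dvd_pow _ (by omega)) hdvd
        have h3 : (p:ℤ)^(ival p (u^2)+1) ∣ u^2 := by
          have := dvd_add h2 h1
          simpa using this
        exact ival_not_dvd hp hu2 h3
      · omega
      · exfalso
        have h1 : (p:ℤ)^(W+1) ∣ u^2 := (ival_dvd_iff hp hu2).mpr (by omega)
        have h2 : (p:ℤ)^(W+1) ∣ u^2 - 4*δ := dvd_trans (pow_dvd_pow _ hW1n) hdvd
        have h3 : (p:ℤ)^(W+1) ∣ 4*δ := by
          have := dvd_sub h1 h2
          simpa using this
        exact ival_not_dvd hp h4δ h3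
    set h := ival p (2*(a*(t₁:ℤ)+b)) with hh
    have hWh : W = 2*h := (hval t₁ ht₁).symm
    set u₁ := 2*(a*(t₁:ℤ)+b) with hu₁
    have hbranch : ∀ t ∈ T, (p:ℤ)^(n-(h+v2)) ∣ (2*(a*(t:ℤ)+b)) - u₁ ∨
        (p:ℤ)^(n-(h+v2)) ∣ (2*(a*(t:ℤ)+b)) + u₁ := by
      intro t ht
      set u := 2*(a*(t:ℤ)+b) with hu
      have hprod : (p:ℤ)^n ∣ (u - u₁) * (u + u₁) := by
        have he : (u-u₁)*(u+u₁) = (u^2 - 4*δ) - (u₁^2 - 4*δ) := by ring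
        rw [he]; exact dvd_sub (hmem t ht) (hmem t₁ ht₁)
      have h2u0 : (2:ℤ)*u ≠ 0 := mul_ne_zero two_ne_zero (hune t ht)
      have h2u : ival p (2*u) = v2 + h := by
        rw [ival_mul two_ne_zero (hune t ht)]
        have := hval t ht; omega
      by_cases hA : (p:ℤ)^(h+v2+1) ∣ (u - u₁)
      · have hB : ¬ (p:ℤ)^(h+v2+1) ∣ (u + u₁) := by
          intro hB
          have hsum : (p:ℤ)^(h+v2+1) ∣ 2*u := by
            have hd := dvd_add hA hB
            have he : (u-u₁)+(u+u₁) = 2*u := by ring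
            rwa [he] at hd
          rw [ival_dvd_iff hp h2u0, h2u] at hsum; omega
        left
        exact pow_dvd_cancel hp (by rwa [mul_comm] at hprod) hB
      · right
        exact pow_dvd_cancel hp hprod hA
    classical
    set E := n - (h+v2) - V with hE
    have hhW : h ≤ W := by omega
    have hEn : E ≤ n := by omega
    have hnE : n - E = h + v2 + V := by omega
    set P : ℕ → Prop := fun t => (p:ℤ)^(n-(h+v2)) ∣ (2*(a*(t:ℤ)+b)) - u₁ with hP
    have hsplit : (T.filter P).card + (T.filter (fun t => ¬ P t)).card = T.card :=
      Finset.card_filter_add_card_filter_not _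
    have hsub1 : T.filter P ⊆ Finset.range (p^n) :=
      subset_trans (Finset.filter_subset _ _) (Finset.filter_subset _ _)
    have hsub2 : T.filter (fun t => ¬ P t) ⊆ Finset.range (p^n) :=
      subset_trans (Finset.filter_subset _ _) (Finset.filter_subset _ _)
    have hkey : ∀ t t' : ℕ, (p:ℤ)^(n-(h+v2)) ∣ (2*(a*(t:ℤ)+b)) - (2*(a*(t':ℤ)+b)) →
        (p:ℤ)^E ∣ (t:ℤ) - t' := by
      intro t t' hd
      have he : (2*(a*(t:ℤ)+b)) - (2*(a*(t':ℤ)+b)) = (2*a) * ((t:ℤ) - t') := by ring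
      rw [he] at hd
      have := pow_dvd_cancel hp hd (ival_not_dvd hp h2a)
      rwa [show n-(h+v2)-V = E by omega] at this
    have hc1 : (T.filter P).card ≤ p^(n-E) := by
      apply cong_bound hp hEn _ hsub1
      intro t ht t' ht'
      have h1 := (Finset.mem_filter.mp ht).2
      have h2 := (Finset.mem_filter.mp ht').2
      exact hkey t t' (by simpa using dvd_sub h1 h2)
    have hc2 : (T.filter (fun t => ¬ P t)).card ≤ p^(n-E) := by
      apply cong_bound hp hEn _ hsub2
      intro t ht t' ht'
      have h1m := Finset.mem_filter.mp ht
      have h2m := Finset.mem_filter.mp ht'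
      have h1 : (p:ℤ)^(n-(h+v2)) ∣ (2*(a*(t:ℤ)+b)) + u₁ :=
        (hbranch t h1m.1).resolve_left h1m.2
      have h2 : (p:ℤ)^(n-(h+v2)) ∣ (2*(a*(t':ℤ)+b)) + u₁ :=
        (hbranch t' h2m.1).resolve_left h2m.2
      exact hkey t t' (by simpa using dvd_sub h1 h2)
    have hfin : T.card ≤ 2 * p^(n-E) := by omega
    have hph : p^h ≤ 4 * δ.natAbs :=
      le_trans (Nat.pow_le_pow_right hp.pos hhW) hpW
    calc T.card ≤ 2 * p^(n-E) := hfin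
      _ = 2 * (p^h * p^v2 * p^V) := by rw [hnE, pow_add, pow_add]
      _ ≤ 2 * ((4*δ.natAbs) * 2 * (2*a.natAbs)) := by
          have := Nat.mul_le_mul (Nat.mul_le_mul hph hpv2) hpV
          omega
      _ ≤ 32 * a.natAbs * δ.natAbs := by nlinarith

lemma primcount_aux {p : ℕ} (hp : p.Prime) (a b c : ℤ) (ha : a ≠ 0)
    (hδ : b^2 - a*c ≠ 0) {n m : ℕ} (hnm : n ≤ m) :
    (((Finset.range (p^m)) ×ˢ (Finset.range (p^m))).filter
      (fun x : ℕ × ℕ => ((p:ℤ)^n ∣ a*(x.1:ℤ)^2 + 2*b*(x.1:ℤ)*(x.2:ℤ) + c*(x.2:ℤ)^2)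
        ∧ ¬ p ∣ x.2)).card
      ≤ (32 * a.natAbs * (b^2-a*c).natAbs) * (p^m * p^(m-n)) := by
  classical
  haveI : NeZero (p^n) := ⟨pow_ne_zero n hp.pos.ne'⟩
  set q := p^n with hq
  set R := ((Finset.range (p^n)).filter
      (fun t : ℕ => (p:ℤ)^n ∣ a*(t:ℤ)^2 + 2*b*(t:ℤ) + c)) with hR
  set S := (((Finset.range (p^m)) ×ˢ (Finset.range (p^m))).filter
      (fun x : ℕ × ℕ => ((p:ℤ)^n ∣ a*(x.1:ℤ)^2 + 2*b*(x.1:ℤ)*(x.2:ℤ) + c*(x.2:ℤ)^2)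
        ∧ ¬ p ∣ x.2)) with hS
  have hcast : ((p:ℤ)^n) = ((q : ℕ) : ℤ) := by rw [hq]; push_cast; ring
  have hcard : S.card ≤ ((Finset.range (p^m)) ×ˢ (R ×ˢ (Finset.range (p^(m-n))))).card := by
    apply Finset.card_le_card_of_injOn
      (fun x => (x.2, ((((x.1 : ZMod q) * (x.2 : ZMod q)⁻¹).val : ℕ), x.1 / q)))
    · rintro ⟨x, y⟩ hxy
      have h1 := Finset.mem_filter.mp hxy
      obtain ⟨hmem, hcond, hy⟩ : _ ∧ _ ∧ _ := ⟨h1.1, h1.2.1, h1.2.2⟩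
      obtain ⟨hx1, hy1⟩ := Finset.mem_product.mp hmem
      simp only [Finset.mem_range] at hx1 hy1
      have hyu : IsUnit ((y : ZMod q)) := by
        rw [ZMod.isUnit_iff_coprime]
        exact Nat.Coprime.pow_right _ (Nat.coprime_comm.mp (hp.coprime_iff_not_dvd.mpr hy))
      set w : ZMod q := (x : ZMod q) * (y : ZMod q)⁻¹ with hw
      have hwy : w * (y : ZMod q) = (x : ZMod q) := by
        rw [hw, mul_assoc, ZMod.inv_mul_of_unit _ hyu, mul_one]
      have hqz : ((a*(x:ℤ)^2 + 2*b*(x:ℤ)*(y:ℤ) + c*(y:ℤ)^2 : ℤ) : ZMod q) = 0 := by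
        rw [ZMod.intCast_zmod_eq_zero_iff_dvd, ← hcast]
        exact hcond
      have hroot : (a : ZMod q) * w^2 + 2*b*w + c = 0 := by
        have hyu2 : IsUnit ((y : ZMod q)^2) := hyu.pow 2
        rw [← hyu2.mul_left_eq_zero]
        push_cast at hqz
        calc ((a : ZMod q) * w^2 + 2*b*w + c) * (y : ZMod q)^2
            = (a : ZMod q) * (w * y)^2 + 2*b*(w*y)*y + c*(y:ZMod q)^2 := by ring
          _ = (a : ZMod q) * (x : ZMod q)^2 + 2*b*(x:ZMod q)*(y:ZMod q) + c*(y:ZMod q)^2 := by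
              rw [hwy]
          _ = 0 := by linear_combination hqz
      refine Finset.mem_product.mpr ⟨Finset.mem_range.mpr hy1, Finset.mem_product.mpr ⟨?_, ?_⟩⟩
      · refine Finset.mem_filter.mpr ⟨Finset.mem_range.mpr (ZMod.val_lt _), ?_⟩
        rw [hcast, ← ZMod.intCast_zmod_eq_zero_iff_dvd]
        push_cast
        rw [ZMod.natCast_val, ZMod.cast_id]
        exact hroot
      · refine Finset.mem_range.mpr ?_
        apply Nat.div_lt_of_lt_mul
        rw [hq, ← pow_add, Nat.add_sub_cancel' hnm]
        exact hx1
    · rintro ⟨x, y⟩ hxy ⟨x', y'⟩ hxy' heq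
      simp only [Prod.mk.injEq] at heq
      obtain ⟨hyy, htt, hxx⟩ := heq
      subst hyy
      have hy : ¬ p ∣ y := (Finset.mem_filter.mp hxy).2.2
      have hyu : IsUnit ((y : ZMod q)) := by
        rw [ZMod.isUnit_iff_coprime]
        exact Nat.Coprime.pow_right _ (Nat.coprime_comm.mp (hp.coprime_iff_not_dvd.mpr hy))
      have hw : ((x : ZMod q) * (y : ZMod q)⁻¹) = ((x' : ZMod q) * (y : ZMod q)⁻¹) :=
        ZMod.val_injective _ htt
      have hxz : (x : ZMod q) = (x' : ZMod q) := by
        have := congrArg (fun z => z * (y : ZMod q)) hw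
        simpa [mul_assoc, ZMod.inv_mul_of_unit _ hyu] using this
      have hmod : x % q = x' % q := (ZMod.natCast_eq_natCast_iff _ _ _).mp hxz
      have hd : x / q = x' / q := hxx
      have : x = x' := by
        calc x = q * (x / q) + x % q := (Nat.div_add_mod x q).symm
          _ = q * (x' / q) + x' % q := by rw [hd, hmod]
          _ = x' := Nat.div_add_mod x' q
      simp [this]
  calc S.card ≤ ((Finset.range (p^m)) ×ˢ (R ×ˢ (Finset.range (p^(m-n))))).card := hcard
    _ = p^m * (R.card * p^(m-n)) := by
        rw [Finset.card_product, Finset.card_product, Finset.card_range, Finset.card_range]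
    _ ≤ p^m * ((32 * a.natAbs * (b^2-a*c).natAbs) * p^(m-n)) := by
        have := rootcount hp a b c ha hδ n
        apply Nat.mul_le_mul_left
        apply Nat.mul_le_mul_right
        exact this
    _ = (32 * a.natAbs * (b^2-a*c).natAbs) * (p^m * p^(m-n)) := by ring

lemma primcount {p : ℕ} (hp : p.Prime) (a b c : ℤ) (ha : a ≠ 0) (hc : c ≠ 0)
    (hδ : b^2 - a*c ≠ 0) {n m : ℕ} (hnm : n ≤ m) :
    (((Finset.range (p^m)) ×ˢ (Finset.range (p^m))).filter
      (fun x : ℕ × ℕ => ((p:ℤ)^n ∣ a*(x.1:ℤ)^2 + 2*b*(x.1:ℤ)*(x.2:ℤ) + c*(x.2:ℤ)^2)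
        ∧ ¬ (p ∣ x.1 ∧ p ∣ x.2))).card
      ≤ (32 * a.natAbs * (b^2-a*c).natAbs + 32 * c.natAbs * (b^2-a*c).natAbs)
          * (p^m * p^(m-n)) := by
  classical
  set Q : ℕ × ℕ → Prop := fun x => (p:ℤ)^n ∣ a*(x.1:ℤ)^2 + 2*b*(x.1:ℤ)*(x.2:ℤ) + c*(x.2:ℤ)^2
    with hQ
  set B := (Finset.range (p^m)) ×ˢ (Finset.range (p^m)) with hB
  have hsub : B.filter (fun x => Q x ∧ ¬ (p ∣ x.1 ∧ p ∣ x.2)) ⊆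
      (B.filter (fun x => Q x ∧ ¬ p ∣ x.2)) ∪ (B.filter (fun x => Q x ∧ ¬ p ∣ x.1)) := by
    intro x hx
    have h1 := Finset.mem_filter.mp hx
    rcases Decidable.not_and_iff_or_not.mp h1.2.2 with h | h
    · exact Finset.mem_union_right _ (Finset.mem_filter.mpr ⟨h1.1, h1.2.1, h⟩)
    · exact Finset.mem_union_left _ (Finset.mem_filter.mpr ⟨h1.1, h1.2.1, h⟩)
  have hc1 : (B.filter (fun x => Q x ∧ ¬ p ∣ x.2)).card
      ≤ (32 * a.natAbs * (b^2-a*c).natAbs) * (p^m * p^(m-n)) :=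
    primcount_aux hp a b c ha hδ hnm
  have hc2 : (B.filter (fun x => Q x ∧ ¬ p ∣ x.1)).card
      ≤ (32 * c.natAbs * (b^2-a*c).natAbs) * (p^m * p^(m-n)) := by
    have hswap : (B.filter (fun x => Q x ∧ ¬ p ∣ x.1)).card ≤
        (((Finset.range (p^m)) ×ˢ (Finset.range (p^m))).filter
          (fun x : ℕ × ℕ => ((p:ℤ)^n ∣ c*(x.1:ℤ)^2 + 2*b*(x.1:ℤ)*(x.2:ℤ) + a*(x.2:ℤ)^2)
            ∧ ¬ p ∣ x.2)).card := by
      apply Finset.card_le_card_of_injOn (fun x => (x.2, x.1))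
      · rintro ⟨x, y⟩ hxy
        have h1 := Finset.mem_filter.mp hxy
        have hmem := Finset.mem_product.mp h1.1
        refine Finset.mem_filter.mpr ⟨Finset.mem_product.mpr ⟨hmem.2, hmem.1⟩, ?_, h1.2.2⟩
        have hcond := h1.2.1
        rw [hQ] at hcond
        simpa [show c*(y:ℤ)^2 + 2*b*(y:ℤ)*(x:ℤ) + a*(x:ℤ)^2
          = a*(x:ℤ)^2 + 2*b*(x:ℤ)*(y:ℤ) + c*(y:ℤ)^2 from by ring] using hcond
      · rintro ⟨x, y⟩ _ ⟨x', y'⟩ _ heq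
        simp only [Prod.mk.injEq] at heq
        simp [heq.1, heq.2]
    calc (B.filter (fun x => Q x ∧ ¬ p ∣ x.1)).card
        ≤ _ := hswap
      _ ≤ (32 * c.natAbs * (b^2-c*a).natAbs) * (p^m * p^(m-n)) :=
          primcount_aux hp c b a hc (by rwa [mul_comm c a]) hnm
      _ = (32 * c.natAbs * (b^2-a*c).natAbs) * (p^m * p^(m-n)) := by rw [mul_comm c a]
  calc (B.filter (fun x => Q x ∧ ¬ (p ∣ x.1 ∧ p ∣ x.2))).card
      ≤ ((B.filter (fun x => Q x ∧ ¬ p ∣ x.2)) ∪ (B.filter (fun x => Q x ∧ ¬ p ∣ x.1))).card :=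
        Finset.card_le_card hsub
    _ ≤ (B.filter (fun x => Q x ∧ ¬ p ∣ x.2)).card
        + (B.filter (fun x => Q x ∧ ¬ p ∣ x.1)).card := Finset.card_union_le _ _
    _ ≤ _ := by
        have := Nat.add_le_add hc1 hc2
        calc _ ≤ (32 * a.natAbs * (b^2-a*c).natAbs) * (p^m * p^(m-n))
              + (32 * c.natAbs * (b^2-a*c).natAbs) * (p^m * p^(m-n)) := this
          _ = (32 * a.natAbs * (b^2-a*c).natAbs + 32 * c.natAbs * (b^2-a*c).natAbs)
              * (p^m * p^(m-n)) := by ring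

lemma twocount {p : ℕ} (hp : p.Prime) (a₁ b₁ c₁ a₂ b₂ c₂ : ℤ)
    (ha₂ : a₂ ≠ 0) (hc₂ : c₂ ≠ 0) (hδ₂ : b₂^2 - a₂*c₂ ≠ 0)
    (hres : (a₁*c₂-a₂*c₁)^2 - 4*(b₁*c₂-b₂*c₁)*(a₁*b₂-a₂*b₁) ≠ 0)
    {n₁ n₂ : ℕ} (h12 : n₁ ≤ n₂) :
    (((Finset.range (p^n₂)) ×ˢ (Finset.range (p^n₂))).filter
      (fun x : ℕ × ℕ => ((p:ℤ)^n₂ ∣ a₂*(x.1:ℤ)^2 + 2*b₂*(x.1:ℤ)*(x.2:ℤ) + c₂*(x.2:ℤ)^2)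
        ∧ ((p:ℤ)^n₁ ∣ a₁*(x.1:ℤ)^2 + 2*b₁*(x.1:ℤ)*(x.2:ℤ) + c₁*(x.2:ℤ)^2))).card
      ≤ ((32*a₂.natAbs*(b₂^2-a₂*c₂).natAbs + 32*c₂.natAbs*(b₂^2-a₂*c₂).natAbs)
          * (((a₁*c₂-a₂*c₁)^2 - 4*(b₁*c₂-b₂*c₁)*(a₁*b₂-a₂*b₁)).natAbs + 2) + 1)
          * ((n₂ - n₁ + 1) * p^n₂) := by
  classical
  set R : ℤ := (a₁*c₂-a₂*c₁)^2 - 4*(b₁*c₂-b₂*c₁)*(a₁*b₂-a₂*b₁) with hR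
  set r₀ := R.natAbs with hr₀
  set C₁ := 32*a₂.natAbs*(b₂^2-a₂*c₂).natAbs + 32*c₂.natAbs*(b₂^2-a₂*c₂).natAbs with hC₁
  set Kt := (n₂+1)/2 with hKt
  set S := (((Finset.range (p^n₂)) ×ˢ (Finset.range (p^n₂))).filter
      (fun x : ℕ × ℕ => ((p:ℤ)^n₂ ∣ a₂*(x.1:ℤ)^2 + 2*b₂*(x.1:ℤ)*(x.2:ℤ) + c₂*(x.2:ℤ)^2)
        ∧ ((p:ℤ)^n₁ ∣ a₁*(x.1:ℤ)^2 + 2*b₁*(x.1:ℤ)*(x.2:ℤ) + c₁*(x.2:ℤ)^2))) with hS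
  set ex : ℕ → ℕ × ℕ → Prop := fun k x =>
    p^k ∣ x.1 ∧ p^k ∣ x.2 ∧ ¬ (p^(k+1) ∣ x.1 ∧ p^(k+1) ∣ x.2) with hex
  set tl : ℕ × ℕ → Prop := fun x => p^Kt ∣ x.1 ∧ p^Kt ∣ x.2 with htl
  -- cover
  have hcover : S.card ≤ (∑ k ∈ Finset.range Kt, (S.filter (ex k)).card)
      + (S.filter tl).card := by
    have hsplit : (S.filter (fun x => ¬ tl x)).card + (S.filter tl).card = S.card := by
      rw [add_comm]
      exact Finset.card_filter_add_card_filter_not _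
    have hsub : S.filter (fun x => ¬ tl x) ⊆
        (Finset.range Kt).biUnion (fun k => S.filter (ex k)) := by
      intro x hx
      have h1 := Finset.mem_filter.mp hx
      have hKt1 : 1 ≤ Kt := by
        by_contra hK
        have hK0 : Kt = 0 := by omega
        exact h1.2 (by rw [htl, hK0]; simp)
      have hexists : ∃ j, ¬ (p^(j+1) ∣ x.1 ∧ p^(j+1) ∣ x.2) := by
        refine ⟨Kt - 1, ?_⟩
        rw [show Kt - 1 + 1 = Kt by omega]
        exact h1.2
      set k₀ := Nat.find hexists with hk₀
      have hk₀spec : ¬ (p^(k₀+1) ∣ x.1 ∧ p^(k₀+1) ∣ x.2) := Nat.find_spec hexists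
      have hk₀le : k₀ ≤ Kt - 1 :=
        Nat.find_le (by rw [show Kt - 1 + 1 = Kt by omega]; exact h1.2)
      have hk₀lt : k₀ < Kt := by omega
      have hboth : p^k₀ ∣ x.1 ∧ p^k₀ ∣ x.2 := by
        rcases Nat.eq_zero_or_pos k₀ with h0 | hpos
        · rw [h0]; simp
        · have hmin := Nat.find_min hexists (show k₀ - 1 < k₀ by omega)
          rw [not_not, show k₀ - 1 + 1 = k₀ by omega] at hmin
          exact hmin
      exact Finset.mem_biUnion.mpr ⟨k₀, Finset.mem_range.mpr hk₀lt,
        Finset.mem_filter.mpr ⟨h1.1, hboth.1, hboth.2, hk₀spec⟩⟩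
    have hb := le_trans (Finset.card_le_card hsub) (Finset.card_biUnion_le)
    omega
  -- tail bound
  have htail : (S.filter tl).card ≤ p^n₂ := by
    have hc : (S.filter tl).card ≤ ((Finset.range (p^(n₂-Kt))) ×ˢ (Finset.range (p^(n₂-Kt)))).card := by
      apply Finset.card_le_card_of_injOn (fun x => (x.1 / p^Kt, x.2 / p^Kt))
      · rintro ⟨x, y⟩ hxy
        have h1 := Finset.mem_filter.mp hxy
        have h2 := Finset.mem_product.mp (Finset.mem_filter.mp h1.1).1
        simp only [Finset.mem_range] at h2
        have hKtn : Kt ≤ n₂ := by omega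
        refine Finset.mem_product.mpr ⟨Finset.mem_range.mpr ?_, Finset.mem_range.mpr ?_⟩
        · exact Nat.div_lt_of_lt_mul (by rw [← pow_add, Nat.add_sub_cancel' hKtn]; exact h2.1)
        · exact Nat.div_lt_of_lt_mul (by rw [← pow_add, Nat.add_sub_cancel' hKtn]; exact h2.2)
      · rintro ⟨x, y⟩ hxy ⟨x', y'⟩ hxy' heq
        have h1 : p^Kt ∣ x ∧ p^Kt ∣ y := (Finset.mem_filter.mp hxy).2
        have h2 : p^Kt ∣ x' ∧ p^Kt ∣ y' := (Finset.mem_filter.mp hxy').2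
        have heq1 : x / p^Kt = x' / p^Kt := congrArg Prod.fst heq
        have heq2 : y / p^Kt = y' / p^Kt := congrArg Prod.snd heq
        have hx : x = x' := by
          rw [← Nat.div_mul_cancel h1.1, ← Nat.div_mul_cancel h2.1, heq1]
        have hy : y = y' := by
          rw [← Nat.div_mul_cancel h1.2, ← Nat.div_mul_cancel h2.2, heq2]
        simp [hx, hy]
    rw [Finset.card_product, Finset.card_range] at hc
    calc (S.filter tl).card ≤ p^(n₂-Kt) * p^(n₂-Kt) := hc
      _ = p^((n₂-Kt)+(n₂-Kt)) := by rw [pow_add]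
      _ ≤ p^n₂ := Nat.pow_le_pow_right hp.pos (by omega)
  -- per-stratum bound and emptiness
  have hstratum : ∀ k, k < Kt → (S.filter (ex k)).card ≤ C₁ * p^n₂ := by
    intro k hk
    have h2k : 2*k ≤ n₂ := by omega
    have hc : (S.filter (ex k)).card ≤
        (((Finset.range (p^(n₂-k))) ×ˢ (Finset.range (p^(n₂-k)))).filter
          (fun x : ℕ × ℕ => ((p:ℤ)^(n₂-2*k) ∣ a₂*(x.1:ℤ)^2 + 2*b₂*(x.1:ℤ)*(x.2:ℤ) + c₂*(x.2:ℤ)^2)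
            ∧ ¬ (p ∣ x.1 ∧ p ∣ x.2))).card := by
      apply Finset.card_le_card_of_injOn (fun x => (x.1 / p^k, x.2 / p^k))
      · rintro ⟨x, y⟩ hxy
        have h1 := Finset.mem_filter.mp hxy
        have hdvd2 := (Finset.mem_filter.mp h1.1).2.1
        have hexk := h1.2
        have h2 := Finset.mem_product.mp (Finset.mem_filter.mp h1.1).1
        simp only [Finset.mem_range] at h2
        have hkn : k ≤ n₂ := by omega
        have hx : (x:ℤ) = (p:ℤ)^k * ((x / p^k : ℕ) : ℤ) := by
          exact_mod_cast (Nat.mul_div_cancel' hexk.1).symm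
        have hy : (y:ℤ) = (p:ℤ)^k * ((y / p^k : ℕ) : ℤ) := by
          exact_mod_cast (Nat.mul_div_cancel' hexk.2.1).symm
        refine Finset.mem_filter.mpr ⟨Finset.mem_product.mpr
          ⟨Finset.mem_range.mpr ?_, Finset.mem_range.mpr ?_⟩, ?_, ?_⟩
        · exact Nat.div_lt_of_lt_mul (by rw [← pow_add, Nat.add_sub_cancel' hkn]; exact h2.1)
        · exact Nat.div_lt_of_lt_mul (by rw [← pow_add, Nat.add_sub_cancel' hkn]; exact h2.2)
        · have hfact : a₂*(x:ℤ)^2 + 2*b₂*(x:ℤ)*(y:ℤ) + c₂*(y:ℤ)^2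
              = (p:ℤ)^(2*k) * (a₂*((x / p^k : ℕ):ℤ)^2 + 2*b₂*((x / p^k : ℕ):ℤ)*((y / p^k : ℕ):ℤ)
                + c₂*((y / p^k : ℕ):ℤ)^2) := by
            rw [hx, hy]; ring
          have hd : (p:ℤ)^(2*k) * (p:ℤ)^(n₂-2*k) ∣ (p:ℤ)^(2*k) * (a₂*((x / p^k : ℕ):ℤ)^2
              + 2*b₂*((x / p^k : ℕ):ℤ)*((y / p^k : ℕ):ℤ) + c₂*((y / p^k : ℕ):ℤ)^2) := by
            rw [← pow_add, show 2*k + (n₂-2*k) = n₂ by omega, ← hfact]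
            exact hdvd2
          exact (mul_dvd_mul_iff_left (pow_ne_zero (2*k) (show (p:ℤ) ≠ 0 by exact_mod_cast hp.pos.ne'))).mp hd
        · rintro ⟨hdx, hdy⟩
          apply hexk.2.2
          constructor
          · rw [← Nat.div_mul_cancel hexk.1, pow_succ, mul_comm (p^k) p]
            exact Nat.mul_dvd_mul hdx dvd_rfl
          · rw [← Nat.div_mul_cancel hexk.2.1, pow_succ, mul_comm (p^k) p]
            exact Nat.mul_dvd_mul hdy dvd_rfl
      · rintro ⟨x, y⟩ hxy ⟨x', y'⟩ hxy' heq
        have h1 := (Finset.mem_filter.mp hxy).2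
        have h2 := (Finset.mem_filter.mp hxy').2
        have h1' : p^k ∣ x ∧ p^k ∣ y := ⟨h1.1, h1.2.1⟩
        have h2' : p^k ∣ x' ∧ p^k ∣ y' := ⟨h2.1, h2.2.1⟩
        have heq1 : x / p^k = x' / p^k := congrArg Prod.fst heq
        have heq2 : y / p^k = y' / p^k := congrArg Prod.snd heq
        have hx : x = x' := by
          rw [← Nat.div_mul_cancel h1'.1, ← Nat.div_mul_cancel h2'.1, heq1]
        have hy : y = y' := by
          rw [← Nat.div_mul_cancel h1'.2, ← Nat.div_mul_cancel h2'.2, heq2]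
        simp [hx, hy]
    have hpc := primcount hp a₂ b₂ c₂ ha₂ hc₂ hδ₂ (show n₂-2*k ≤ n₂-k by omega)
    calc (S.filter (ex k)).card ≤ _ := hc
      _ ≤ C₁ * (p^(n₂-k) * p^((n₂-k)-(n₂-2*k))) := hpc
      _ = C₁ * p^n₂ := by
          rw [← pow_add, show (n₂-k) + ((n₂-k)-(n₂-2*k)) = n₂ by omega]
  -- emptiness of strata with deep q₁-condition, via the resultant
  have hempty : ∀ k, k < Kt → (S.filter (ex k)).card ≠ 0 → n₁ ≤ 2*k + r₀ := by
    intro k hk hne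
    obtain ⟨⟨x, y⟩, hxy⟩ := Finset.card_ne_zero.mp hne
    by_contra hcon
    push_neg at hcon
    set s := n₁ - 2*k with hs
    have hs1 : 1 ≤ s := by omega
    have h1 := Finset.mem_filter.mp hxy
    have hexk := h1.2
    have hq2 : (p:ℤ)^n₂ ∣ a₂*(x:ℤ)^2 + 2*b₂*(x:ℤ)*(y:ℤ) + c₂*(y:ℤ)^2 :=
      (Finset.mem_filter.mp h1.1).2.1
    have hq1 : (p:ℤ)^n₁ ∣ a₁*(x:ℤ)^2 + 2*b₁*(x:ℤ)*(y:ℤ) + c₁*(y:ℤ)^2 :=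
      (Finset.mem_filter.mp h1.1).2.2
    have hpne : (p:ℤ) ≠ 0 := by exact_mod_cast hp.pos.ne'
    have hx : (x:ℤ) = (p:ℤ)^k * ((x / p^k : ℕ) : ℤ) := by
      exact_mod_cast (Nat.mul_div_cancel' hexk.1).symm
    have hy : (y:ℤ) = (p:ℤ)^k * ((y / p^k : ℕ) : ℤ) := by
      exact_mod_cast (Nat.mul_div_cancel' hexk.2.1).symm
    set X : ℤ := ((x / p^k : ℕ) : ℤ) with hX
    set Y : ℤ := ((y / p^k : ℕ) : ℤ) with hY
    have hcancel : ∀ (A : ℤ) (nn : ℕ), 2*k ≤ nn → (p:ℤ)^nn ∣ (p:ℤ)^(2*k) * A →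
        (p:ℤ)^(nn - 2*k) ∣ A := by
      intro A nn hnn hd
      have he : (p:ℤ)^nn = (p:ℤ)^(2*k) * (p:ℤ)^(nn-2*k) := by
        rw [← pow_add]; congr 1; omega
      rw [he] at hd
      exact (mul_dvd_mul_iff_left (pow_ne_zero (2*k) hpne)).mp hd
    have hq1' : (p:ℤ)^s ∣ a₁*X^2 + 2*b₁*X*Y + c₁*Y^2 := by
      apply hcancel _ n₁ (by omega)
      rw [show (p:ℤ)^(2*k) * (a₁*X^2 + 2*b₁*X*Y + c₁*Y^2)
        = a₁*((p:ℤ)^k*X)^2 + 2*b₁*((p:ℤ)^k*X)*((p:ℤ)^k*Y) + c₁*((p:ℤ)^k*Y)^2 by ring,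
        ← hx, ← hy]
      exact hq1
    have hq2' : (p:ℤ)^s ∣ a₂*X^2 + 2*b₂*X*Y + c₂*Y^2 := by
      have h2' : (p:ℤ)^(n₂-2*k) ∣ a₂*X^2 + 2*b₂*X*Y + c₂*Y^2 := by
        apply hcancel _ n₂ (by omega)
        rw [show (p:ℤ)^(2*k) * (a₂*X^2 + 2*b₂*X*Y + c₂*Y^2)
          = a₂*((p:ℤ)^k*X)^2 + 2*b₂*((p:ℤ)^k*X)*((p:ℤ)^k*Y) + c₂*((p:ℤ)^k*Y)^2 by ring,
          ← hx, ← hy]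
        exact hq2
      exact dvd_trans (pow_dvd_pow _ (by omega)) h2'
    have hRy : (p:ℤ)^s ∣ R * Y^3 := by
      have hid : R * Y^3 =
          (a₂*(2*(a₁*b₂-a₂*b₁)*X - (a₁*c₂-a₂*c₁)*Y) + 4*(a₁*b₂-a₂*b₁)*b₂*Y)
            * (a₁*X^2 + 2*b₁*X*Y + c₁*Y^2)
          + (-(a₁*(2*(a₁*b₂-a₂*b₁)*X - (a₁*c₂-a₂*c₁)*Y)) - 4*(a₁*b₂-a₂*b₁)*b₁*Y)
            * (a₂*X^2 + 2*b₂*X*Y + c₂*Y^2) := by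
        rw [hR]; ring
      rw [hid]
      exact dvd_add (Dvd.dvd.mul_left hq1' _) (Dvd.dvd.mul_left hq2' _)
    have hRx : (p:ℤ)^s ∣ R * X^3 := by
      have hid : R * X^3 =
          (c₂*((a₁*c₂-a₂*c₁)*X - 2*(b₁*c₂-b₂*c₁)*Y) - 4*(b₁*c₂-b₂*c₁)*b₂*X)
            * (a₁*X^2 + 2*b₁*X*Y + c₁*Y^2)
          + (-(c₁*((a₁*c₂-a₂*c₁)*X - 2*(b₁*c₂-b₂*c₁)*Y)) + 4*(b₁*c₂-b₂*c₁)*b₁*X)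
            * (a₂*X^2 + 2*b₂*X*Y + c₂*Y^2) := by
        rw [hR]; ring
      rw [hid]
      exact dvd_add (Dvd.dvd.mul_left hq1' _) (Dvd.dvd.mul_left hq2' _)
    have hprim : ¬ (p ∣ x / p^k ∧ p ∣ y / p^k) := by
      rintro ⟨hdx, hdy⟩
      apply hexk.2.2
      constructor
      · rw [← Nat.div_mul_cancel hexk.1, pow_succ, mul_comm (p^k) p]
        exact Nat.mul_dvd_mul hdx dvd_rfl
      · rw [← Nat.div_mul_cancel hexk.2.1, pow_succ, mul_comm (p^k) p]
        exact Nat.mul_dvd_mul hdy dvd_rfl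
    have hpsR : (p:ℤ)^s ∣ R := by
      rcases Decidable.not_and_iff_or_not.mp hprim with hnx | hny
      · have hcop : IsCoprime ((p:ℤ)^s) (X^3) := by
          apply IsCoprime.pow
          exact (Nat.isCoprime_iff_coprime).mpr ((hp.coprime_iff_not_dvd).mpr hnx)
        exact hcop.dvd_of_dvd_mul_right hRx
      · have hcop : IsCoprime ((p:ℤ)^s) (Y^3) := by
          apply IsCoprime.pow
          exact (Nat.isCoprime_iff_coprime).mpr ((hp.coprime_iff_not_dvd).mpr hny)
        exact hcop.dvd_of_dvd_mul_right hRy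
    have hple : p^s ≤ r₀ := pow_le_natAbs hres hpsR
    have h2s : 2^s ≤ p^s := Nat.pow_le_pow_left hp.two_le s
    have hlt : s < 2^s := Nat.lt_two_pow_self
    omega
  -- sum over strata
  have hsum : ∑ k ∈ Finset.range Kt, (S.filter (ex k)).card
      ≤ (n₂ - n₁ + r₀ + 2) * (C₁ * p^n₂) := by
    rw [← Finset.sum_filter_add_sum_filter_not (Finset.range Kt) (fun k => n₁ ≤ 2*k + r₀)]
    have h2 : ∑ k ∈ (Finset.range Kt).filter (fun k => ¬ n₁ ≤ 2*k + r₀),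
        (S.filter (ex k)).card = 0 := by
      apply Finset.sum_eq_zero
      intro k hkm
      have hm := Finset.mem_filter.mp hkm
      by_contra hne
      exact hm.2 (hempty k (Finset.mem_range.mp hm.1) hne)
    rw [h2, add_zero]
    calc ∑ k ∈ (Finset.range Kt).filter (fun k => n₁ ≤ 2*k + r₀), (S.filter (ex k)).card
        ≤ ∑ _k ∈ (Finset.range Kt).filter (fun k => n₁ ≤ 2*k + r₀), C₁ * p^n₂ :=
          Finset.sum_le_sum (fun k hkm =>
            hstratum k (Finset.mem_range.mp (Finset.mem_filter.mp hkm).1))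
      _ = ((Finset.range Kt).filter (fun k => n₁ ≤ 2*k + r₀)).card * (C₁ * p^n₂) := by
          rw [Finset.sum_const, smul_eq_mul]
      _ ≤ (n₂ - n₁ + r₀ + 2) * (C₁ * p^n₂) := by
          apply Nat.mul_le_mul_right
          have hsub : (Finset.range Kt).filter (fun k => n₁ ≤ 2*k + r₀) ⊆
              Finset.Ico ((n₁ - r₀)/2) Kt := by
            intro k hkm
            have hm := Finset.mem_filter.mp hkm
            have hmr := Finset.mem_range.mp hm.1
            have hg := hm.2
            exact Finset.mem_Ico.mpr ⟨by omega, hmr⟩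
          calc ((Finset.range Kt).filter (fun k => n₁ ≤ 2*k + r₀)).card
              ≤ (Finset.Ico ((n₁ - r₀)/2) Kt).card := Finset.card_le_card hsub
            _ = Kt - (n₁ - r₀)/2 := Nat.card_Ico _ _
            _ ≤ n₂ - n₁ + r₀ + 2 := by omega
  -- conclude
  have hfinal : S.card ≤ (n₂ - n₁ + r₀ + 2) * (C₁ * p^n₂) + p^n₂ := by omega
  have e1 : n₂ - n₁ + r₀ + 2 ≤ (r₀+2)*((n₂-n₁)+1) := by nlinarith
  calc S.card ≤ (n₂ - n₁ + r₀ + 2) * (C₁ * p^n₂) + p^n₂ := hfinal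
    _ ≤ ((r₀+2)*((n₂-n₁)+1)) * (C₁*p^n₂) + (n₂-n₁+1)*p^n₂ := by
        have hm := Nat.mul_le_mul_right (C₁*p^n₂) e1
        have h2 : p^n₂ ≤ (n₂-n₁+1)*p^n₂ := Nat.le_mul_of_pos_left _ (by omega)
        omega
    _ = (C₁*(r₀+2)+1) * ((n₂-n₁+1) * p^n₂) := by ring

lemma period_count {N kk : ℕ} (hN : 0 < N) (P : ℕ × ℕ → Prop) [DecidablePred P]
    (hP : ∀ x₁ x₂ : ℕ, P (x₁, x₂) ↔ P (x₁ % N, x₂ % N)) :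
    (((Finset.range (kk*N)) ×ˢ (Finset.range (kk*N))).filter P).card ≤
      kk^2 * (((Finset.range N) ×ˢ (Finset.range N)).filter P).card := by
  classical
  have hcard : (((Finset.range (kk*N)) ×ˢ (Finset.range (kk*N))).filter P).card ≤
      (((Finset.range kk) ×ˢ (Finset.range kk)) ×ˢ
        (((Finset.range N) ×ˢ (Finset.range N)).filter P)).card := by
    apply Finset.card_le_card_of_injOn
      (fun x => ((x.1 / N, x.2 / N), (x.1 % N, x.2 % N)))
    · rintro ⟨x, y⟩ hxy
      have h1 := Finset.mem_filter.mp hxy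
      have h2 := Finset.mem_product.mp h1.1
      simp only [Finset.mem_range] at h2
      refine Finset.mem_product.mpr ⟨Finset.mem_product.mpr
        ⟨Finset.mem_range.mpr ?_, Finset.mem_range.mpr ?_⟩, Finset.mem_filter.mpr
        ⟨Finset.mem_product.mpr ⟨Finset.mem_range.mpr (Nat.mod_lt _ hN),
          Finset.mem_range.mpr (Nat.mod_lt _ hN)⟩, ?_⟩⟩
      · exact Nat.div_lt_of_lt_mul (by rw [mul_comm]; exact h2.1)
      · exact Nat.div_lt_of_lt_mul (by rw [mul_comm]; exact h2.2)
      · exact (hP x y).mp h1.2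
    · rintro ⟨x, y⟩ _ ⟨x', y'⟩ _ heq
      simp only [Prod.mk.injEq] at heq
      obtain ⟨⟨hd1, hd2⟩, hm1, hm2⟩ := heq
      have hx : x = x' := by
        calc x = N * (x / N) + x % N := (Nat.div_add_mod x N).symm
          _ = N * (x' / N) + x' % N := by rw [hd1, hm1]
          _ = x' := Nat.div_add_mod x' N
      have hy : y = y' := by
        calc y = N * (y / N) + y % N := (Nat.div_add_mod y N).symm
          _ = N * (y' / N) + y' % N := by rw [hd2, hm2]
          _ = y' := Nat.div_add_mod y' N
      simp [hx, hy]
  calc (((Finset.range (kk*N)) ×ˢ (Finset.range (kk*N))).filter P).card ≤ _ := hcard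
    _ = kk^2 * (((Finset.range N) ×ˢ (Finset.range N)).filter P).card := by
        rw [Finset.card_product, Finset.card_product, Finset.card_range, sq]

/-- upper bound for `ρ` at prime powers, with exponents sorted by a
permutation `σ`. -/
theorem stmt6 (g : ℕ) (hg : 2 ≤ g) (a b c : Fin g → ℤ)
    (hirr : ∀ i, ¬ IsSquare (b i ^ 2 - a i * c i))
    (hD : Dconst g a b c ≠ 0) :
    ∃ C : ℕ, 0 < C ∧ ∀ p : ℕ, p.Prime → ∀ e : Fin g → ℕ, ∀ σ : Equiv.Perm (Fin g),
      (∀ i j : Fin g, i ≤ j → e (σ i) ≤ e (σ j)) →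
      rho g a b c (fun i => p ^ e i) ≤
        C * (e (σ ⟨g - 1, by omega⟩) - e (σ ⟨g - 2, by omega⟩) + 1) *
          p ^ (2 * ∑ i ∈ Finset.univ.erase (⟨g - 1, by omega⟩ : Fin g), e (σ i) +
            e (σ ⟨g - 1, by omega⟩)) := by
  -- nonvanishing facts from hD
  have hD3 : (∏ i, ∏ j ∈ Finset.Ioi i, res₂ (a i) (b i) (c i) (a j) (b j) (c j)) ≠ 0 :=
    fun h => hD (by unfold Dconst; rw [h, mul_zero])
  have hD2 : (∏ k, a k * c k * (b k ^ 2 - a k * c k)) ≠ 0 :=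
    fun h => hD (by unfold Dconst; rw [h, mul_zero, zero_mul])
  have hac : ∀ i : Fin g, a i ≠ 0 ∧ c i ≠ 0 ∧ b i ^ 2 - a i * c i ≠ 0 := by
    intro i
    have h1 := Finset.prod_ne_zero_iff.mp hD2 i (Finset.mem_univ i)
    rcases mul_ne_zero_iff.mp h1 with ⟨h2, h3⟩
    rcases mul_ne_zero_iff.mp h2 with ⟨h4, h5⟩
    exact ⟨h4, h5, h3⟩
  have hres0 : ∀ i j : Fin g, i ≠ j →
      res₂ (a i) (b i) (c i) (a j) (b j) (c j) ≠ 0 := by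
    intro i j hij
    rcases lt_or_gt_of_ne hij with h | h
    · exact Finset.prod_ne_zero_iff.mp
        (Finset.prod_ne_zero_iff.mp hD3 i (Finset.mem_univ i)) j (Finset.mem_Ioi.mpr h)
    · have := Finset.prod_ne_zero_iff.mp
        (Finset.prod_ne_zero_iff.mp hD3 j (Finset.mem_univ j)) i (Finset.mem_Ioi.mpr h)
      intro hc
      apply this
      rw [← hc]
      unfold res₂
      ring
  -- the constant
  set Cp : Fin g → Fin g → ℕ := fun i j =>
    (32*(a j).natAbs*((b j)^2 - a j * c j).natAbs
        + 32*(c j).natAbs*((b j)^2 - a j * c j).natAbs)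
      * ((res₂ (a i) (b i) (c i) (a j) (b j) (c j)).natAbs + 2) + 1 with hCp
  refine ⟨(∑ i, ∑ j, Cp i j) + 1, by positivity, ?_⟩
  intro p hp e σ hsort
  set i₉ : Fin g := ⟨g - 1, by omega⟩ with hi₉
  set i₈ : Fin g := ⟨g - 2, by omega⟩ with hi₈
  set j₂ := σ i₉ with hj₂
  set j₁ := σ i₈ with hj₁
  set E := e j₂ with hE
  set S' := ∑ i ∈ Finset.univ.erase i₉, e (σ i) with hS'
  have hEmax : ∀ i, e i ≤ E := by
    intro i
    have h1 : σ.symm i ≤ i₉ := by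
      rw [Fin.le_def]
      have := (σ.symm i).isLt
      simp only [hi₉]
      omega
    have := hsort (σ.symm i) i₉ h1
    rwa [Equiv.apply_symm_apply] at this
  have h12 : e j₁ ≤ E := by
    apply hsort
    rw [Fin.le_def]
    simp only [hi₈, hi₉]
    omega
  have hj12 : j₁ ≠ j₂ := by
    simp only [hj₁, hj₂]
    intro hc
    have := σ.injective hc
    rw [hi₈, hi₉] at this
    have := Fin.mk.inj_iff.mp this
    omega
  -- total modulus
  have hsum : ∑ i, e i = E + S' := by
    rw [hS', hE]
    rw [← Equiv.sum_comp σ e]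
    exact (Finset.add_sum_erase _ _ (Finset.mem_univ i₉)).symm
  have hprod : (∏ i, p ^ e i) = p ^ S' * p ^ E := by
    rw [Finset.prod_pow_eq_pow_sum, hsum, ← pow_add]
    congr 1
    omega
  -- periodic predicate
  set P : ℕ × ℕ → Prop := fun x => ∀ i, ((p ^ e i : ℕ) : ℤ) ∣ qf a b c i ((x.1 : ℤ), (x.2 : ℤ))
    with hP
  have hrho : rho g a b c (fun i => p ^ e i) =
      (((Finset.range (p ^ S' * p ^ E)) ×ˢ (Finset.range (p ^ S' * p ^ E))).filter P).card := by
    unfold rho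
    rw [hprod]
  have hqfmod : ∀ (i : Fin g) (x₁ x₂ : ℕ),
      (((p ^ e i : ℕ) : ℤ) ∣ qf a b c i ((x₁ : ℤ), (x₂ : ℤ))) ↔
      (((p ^ e i : ℕ) : ℤ) ∣ qf a b c i (((x₁ % p ^ E : ℕ) : ℤ), ((x₂ % p ^ E : ℕ) : ℤ))) := by
    intro i x₁ x₂
    have hd1 : ((p ^ E : ℕ) : ℤ) ∣ (x₁ : ℤ) - ((x₁ % p ^ E : ℕ) : ℤ) := by
      refine ⟨(x₁ / p ^ E : ℕ), ?_⟩
      have h := Nat.div_add_mod x₁ (p ^ E)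
      have h'' : ((p ^ E : ℕ) : ℤ) * ((x₁ / p ^ E : ℕ) : ℤ) + ((x₁ % p ^ E : ℕ) : ℤ)
          = (x₁ : ℤ) := by exact_mod_cast congrArg (Nat.cast : ℕ → ℤ) h
      linarith [h'']
    have hd2 : ((p ^ E : ℕ) : ℤ) ∣ (x₂ : ℤ) - ((x₂ % p ^ E : ℕ) : ℤ) := by
      refine ⟨(x₂ / p ^ E : ℕ), ?_⟩
      have h := Nat.div_add_mod x₂ (p ^ E)
      have h'' : ((p ^ E : ℕ) : ℤ) * ((x₂ / p ^ E : ℕ) : ℤ) + ((x₂ % p ^ E : ℕ) : ℤ)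
          = (x₂ : ℤ) := by exact_mod_cast congrArg (Nat.cast : ℕ → ℤ) h
      linarith [h'']
    have hie : ((p ^ e i : ℕ) : ℤ) ∣ ((p ^ E : ℕ) : ℤ) := by
      exact_mod_cast pow_dvd_pow p (hEmax i)
    have hX := dvd_trans hie hd1
    have hY := dvd_trans hie hd2
    set m : ℤ := ((p ^ e i : ℕ) : ℤ)
    set X : ℤ := (x₁ : ℤ)
    set Y : ℤ := (x₂ : ℤ)
    set X' : ℤ := ((x₁ % p ^ E : ℕ) : ℤ)
    set Y' : ℤ := ((x₂ % p ^ E : ℕ) : ℤ)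
    have hdiff : m ∣ qf a b c i (X, Y) - qf a b c i (X', Y') := by
      have hidd : qf a b c i (X, Y) - qf a b c i (X', Y') =
          (a i) * ((X - X') * (X + X')) + 2 * (b i) * (X * (Y - Y') + Y' * (X - X'))
            + (c i) * ((Y - Y') * (Y + Y')) := by
        unfold qf
        ring
      rw [hidd]
      refine dvd_add (dvd_add ?_ ?_) ?_
      · exact Dvd.dvd.mul_left (hX.mul_right _) _
      · exact Dvd.dvd.mul_left (dvd_add (hY.mul_left _) (hX.mul_left _)) _
      · exact Dvd.dvd.mul_left (hY.mul_right _) _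
    constructor
    · intro h
      have := dvd_sub h hdiff
      simpa using this
    · intro h
      have := dvd_add h hdiff
      simpa using this
  have hper := period_count (N := p ^ E) (kk := p ^ S') (pow_pos hp.pos E) P
    (fun x₁ x₂ => by
      constructor
      · intro h i
        exact (hqfmod i x₁ x₂).mp (h i)
      · intro h i
        exact (hqfmod i x₁ x₂).mpr (h i))
  -- restrict to the two largest conditions
  have hsubset : (((Finset.range (p ^ E)) ×ˢ (Finset.range (p ^ E))).filter P).card ≤
      (((Finset.range (p^E)) ×ˢ (Finset.range (p^E))).filter
        (fun x : ℕ × ℕ =>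
          ((p:ℤ)^E ∣ (a j₂)*(x.1:ℤ)^2 + 2*(b j₂)*(x.1:ℤ)*(x.2:ℤ) + (c j₂)*(x.2:ℤ)^2)
          ∧ ((p:ℤ)^(e j₁) ∣ (a j₁)*(x.1:ℤ)^2 + 2*(b j₁)*(x.1:ℤ)*(x.2:ℤ) + (c j₁)*(x.2:ℤ)^2))).card := by
    apply Finset.card_le_card
    apply Finset.monotone_filter_right
    intro x _ hx
    have h2 := hx j₂
    have h1 := hx j₁
    unfold qf at h1 h2
    push_cast at h1 h2
    exact ⟨h2, h1⟩
  have htwo := twocount hp (a j₁) (b j₁) (c j₁) (a j₂) (b j₂) (c j₂)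
    (hac j₂).1 (hac j₂).2.1 (hac j₂).2.2 (hres0 j₁ j₂ hj12) h12
  -- put everything together
  have hCple : Cp j₁ j₂ ≤ (∑ i, ∑ j, Cp i j) + 1 := by
    have h1 : Cp j₁ j₂ ≤ ∑ j, Cp j₁ j :=
      Finset.single_le_sum (fun _ _ => Nat.zero_le _) (Finset.mem_univ j₂)
    have h2 : (∑ j, Cp j₁ j) ≤ ∑ i, ∑ j, Cp i j :=
      Finset.single_le_sum (f := fun i => ∑ j, Cp i j) (fun _ _ => Nat.zero_le _)
        (Finset.mem_univ j₁)
    omega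
  calc rho g a b c (fun i => p ^ e i)
      = (((Finset.range (p ^ S' * p ^ E)) ×ˢ (Finset.range (p ^ S' * p ^ E))).filter P).card := hrho
    _ ≤ (p ^ S')^2 * (((Finset.range (p ^ E)) ×ˢ (Finset.range (p ^ E))).filter P).card := hper
    _ ≤ (p ^ S')^2 * ((((Finset.range (p^E)) ×ˢ (Finset.range (p^E))).filter
          (fun x : ℕ × ℕ =>
            ((p:ℤ)^E ∣ (a j₂)*(x.1:ℤ)^2 + 2*(b j₂)*(x.1:ℤ)*(x.2:ℤ) + (c j₂)*(x.2:ℤ)^2)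
            ∧ ((p:ℤ)^(e j₁) ∣ (a j₁)*(x.1:ℤ)^2 + 2*(b j₁)*(x.1:ℤ)*(x.2:ℤ) + (c j₁)*(x.2:ℤ)^2))).card) :=
        Nat.mul_le_mul_left _ hsubset
    _ ≤ (p ^ S')^2 * (Cp j₁ j₂ * ((E - e j₁ + 1) * p ^ E)) := Nat.mul_le_mul_left _ htwo
    _ ≤ (p ^ S')^2 * (((∑ i, ∑ j, Cp i j) + 1) * ((E - e j₁ + 1) * p ^ E)) := by
        apply Nat.mul_le_mul_left
        apply Nat.mul_le_mul_right
        exact hCple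
    _ = ((∑ i, ∑ j, Cp i j) + 1) * (E - e j₁ + 1) * p ^ (2 * S' + E) := by
        ring
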